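/- For every n ≥ 2, every β ∈ ℝ^{n-1}, every μ ∈ ℝⁿ, and all σ, π ∈ S_n: d^μ_β(σ,π) = Σ_{x ∈ [n]} ( f_β(|x^{↓,π}|) + f_β(|x^{↓,σ}|) − 2 f_β(|x^{↓,σ} ∩ x^{↓,π}|) ) μ_x. -/
import Mathlib


open Finset

noncomputable section

/-- `i >_σ j`: candidate `i` is ranked above candidate `j` by `σ`
(where `σ i` is the candidate in position `i`). -/
def prefOver {n : ℕ} (σ : Equiv.Perm (Fin n)) (i j : Fin n) : Prop :=
  σ.symm i < σ.symm j

/-- `M(S,σ)`: the set of `>_σ`-maximal elements of `S` (a singleton when `S ≠ ∅`). -/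
def bestSet {n : ℕ} (σ : Equiv.Perm (Fin n)) (S : Finset (Fin n)) : Finset (Fin n) :=
  S.filter fun x => ∀ y ∈ S, σ.symm x ≤ σ.symm y

/-- `△_S(σ,π) = M(S,σ) △ M(S,π)`. -/
def topDiff {n : ℕ} (σ π : Equiv.Perm (Fin n)) (S : Finset (Fin n)) : Finset (Fin n) :=
  symmDiff (bestSet σ S) (bestSet π S)

/-- The `(β,μ)`-top-difference distance; `β i` is the weight of menus of size `i+2`. -/
def dTD (n : ℕ) (β : Fin (n - 1) → ℝ) (μ : Fin n → ℝ)
    (σ π : Equiv.Perm (Fin n)) : ℝ :=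
  ∑ S ∈ Finset.univ.filter (fun S : Finset (Fin n) => 2 ≤ S.card),
    (if h : S.card - 2 < n - 1 then β ⟨S.card - 2, h⟩ else 0) *
      ∑ x ∈ topDiff σ π S, μ x

def IsSemimetric {α : Type*} (d : α → α → ℝ) : Prop :=
  (∀ x y, 0 ≤ d x y) ∧ (∀ x y, d x y = d y x) ∧ (∀ x, d x x = 0) ∧
    (∀ x y z, d x z ≤ d x y + d y z)

def IsMetricFn {α : Type*} (d : α → α → ℝ) : Prop :=
  IsSemimetric d ∧ ∀ x y, d x y = 0 → x = y

/-- `x^{↓,σ}`: the set of candidates ranked strictly below `x` by `σ`. -/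
def downSet {n : ℕ} (σ : Equiv.Perm (Fin n)) (x : Fin n) : Finset (Fin n) :=
  Finset.univ.filter fun i => σ.symm x < σ.symm i

/-- `f_β(t) = Σ_{k=2}^n β_k C(t,k-1)`. -/
def fβ (n : ℕ) (β : Fin (n - 1) → ℝ) (t : ℕ) : ℝ :=
  ∑ k : Fin (n - 1), β k * (t.choose (k.1 + 1) : ℝ)

lemma mem_bestSet_iff {n : ℕ} (σ : Equiv.Perm (Fin n)) (S : Finset (Fin n)) (x : Fin n) :
    x ∈ bestSet σ S ↔ x ∈ S ∧ S ⊆ insert x (downSet σ x) := by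
  simp only [bestSet, mem_filter, downSet]
  constructor
  · rintro ⟨hxS, h⟩
    refine ⟨hxS, fun y hy => ?_⟩
    rcases lt_or_eq_of_le (h y hy) with h' | h'
    · exact mem_insert_of_mem (by simp [h'])
    · have : x = y := σ.symm.injective h'
      simp [this]
  · rintro ⟨hxS, h⟩
    refine ⟨hxS, fun y hy => ?_⟩
    rcases mem_insert.mp (h hy) with h' | h'
    · simp [h']
    · exact le_of_lt (by simpa using h')

lemma notMem_downSet {n : ℕ} (σ : Equiv.Perm (Fin n)) (x : Fin n) :
    x ∉ downSet σ x := by simp [downSet]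

lemma card_le_of_notMem {n : ℕ} {x : Fin n} {D : Finset (Fin n)} (hx : x ∉ D) :
    D.card ≤ n - 1 := by
  have h : D ⊆ Finset.univ.erase x := fun y hy =>
    Finset.mem_erase.mpr ⟨fun he => hx (he ▸ hy), Finset.mem_univ y⟩
  have := Finset.card_le_card h
  simpa [Finset.card_erase_of_mem, Finset.card_univ] using this

lemma key_sum (n : ℕ) (hn : 2 ≤ n) (β : Fin (n - 1) → ℝ) (D : Finset (Fin n))
    (hD : D.card ≤ n - 1) :
    ∑ T ∈ D.powerset.filter (fun T => T.Nonempty),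
      (if h : T.card - 1 < n - 1 then β ⟨T.card - 1, h⟩ else 0)
    = fβ n β D.card := by
  set g : Finset (Fin n) → ℝ :=
    fun T => (if h : T.card - 1 < n - 1 then β ⟨T.card - 1, h⟩ else 0) with hg
  have hn1 : 0 < n - 1 := by omega
  have hfilter : D.powerset.filter (fun T => ¬ T.Nonempty) = {∅} := by
    ext T
    simp [Finset.not_nonempty_iff_eq_empty]
    rintro rfl
    exact Finset.empty_subset D
  have hsplit := Finset.sum_filter_add_sum_filter_not D.powerset
    (fun T => T.Nonempty) g
  rw [hfilter, Finset.sum_singleton] at hsplit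
  have hgempty : g ∅ = β ⟨0, hn1⟩ := by simp [hg, hn1]
  -- sum over powerset grouped by cardinality
  have hpow : ∑ T ∈ D.powerset, g T
      = ∑ j ∈ Finset.range (D.card + 1), ∑ T ∈ Finset.powersetCard j D, g T :=
    Finset.sum_powerset D g
  have hinner : ∀ j, ∑ T ∈ Finset.powersetCard j D, g T
      = (D.card.choose j : ℝ) * (if h : j - 1 < n - 1 then β ⟨j - 1, h⟩ else 0) := by
    intro j
    have : ∀ T ∈ Finset.powersetCard j D, g T
        = (if h : j - 1 < n - 1 then β ⟨j - 1, h⟩ else 0) := by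
      intro T hT
      have := (Finset.mem_powersetCard.mp hT).2
      simp [hg, this]
    rw [Finset.sum_congr rfl this, Finset.sum_const, Finset.card_powersetCard,
      nsmul_eq_mul]
  set t := D.card with ht
  have hw : ∑ T ∈ D.powerset, g T
      = ∑ j ∈ Finset.range (t + 1),
          (t.choose j : ℝ) * (if h : j - 1 < n - 1 then β ⟨j - 1, h⟩ else 0) := by
    rw [hpow]; exact Finset.sum_congr rfl fun j _ => hinner j
  rw [hw] at hsplit
  rw [Finset.sum_range_succ'] at hsplit
  -- the j = 0 term equals g ∅
  have h0 : (t.choose 0 : ℝ) * (if h : 0 - 1 < n - 1 then β ⟨0 - 1, h⟩ else 0)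
      = g ∅ := by simp [hgempty, hn1]
  rw [h0] at hsplit
  have hmain : ∑ T ∈ D.powerset.filter (fun T => T.Nonempty), g T
      = ∑ j ∈ Finset.range t,
          (t.choose (j + 1) : ℝ) *
            (if h : j + 1 - 1 < n - 1 then β ⟨j + 1 - 1, h⟩ else 0) := by
    linarith [hsplit]
  rw [hmain]
  -- now compare with fβ
  set F : ℕ → ℝ := fun k =>
    (if h : k < n - 1 then β ⟨k, h⟩ * (t.choose (k + 1) : ℝ) else 0) with hF
  have hfb : fβ n β t = ∑ k ∈ Finset.range (n - 1), F k := by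
    rw [fβ, ← Fin.sum_univ_eq_sum_range F (n - 1)]
    refine Finset.sum_congr rfl fun k _ => ?_
    simp [hF, k.isLt]
  rw [hfb]
  have hle : Finset.range t ⊆ Finset.range (n - 1) := by
    intro j hj
    simp only [Finset.mem_range] at *
    omega
  rw [← Finset.sum_subset hle (by
    intro j _ hj
    simp only [Finset.mem_range, not_lt] at hj
    have : t < j + 1 := by omega
    simp [hF, Nat.choose_eq_zero_of_lt this])]
  refine Finset.sum_congr rfl fun j hj => ?_
  have hjt : j < t := Finset.mem_range.mp hj
  have hjn : j < n - 1 := lt_of_lt_of_le hjt hD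
  simp only [Nat.add_sub_cancel, hF, hjn, dif_pos]
  ring

lemma count_sum (n : ℕ) (hn : 2 ≤ n) (β : Fin (n - 1) → ℝ) (x : Fin n)
    (D : Finset (Fin n)) (hx : x ∉ D) :
    ∑ S ∈ Finset.univ.filter (fun S : Finset (Fin n) => 2 ≤ S.card),
      (if h : S.card - 2 < n - 1 then β ⟨S.card - 2, h⟩ else 0) *
        (if x ∈ S ∧ S ⊆ insert x D then (1 : ℝ) else 0)
    = fβ n β D.card := by
  have hD : D.card ≤ n - 1 := card_le_of_notMem hx
  rw [← key_sum n hn β D hD]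
  have : ∑ S ∈ Finset.univ.filter (fun S : Finset (Fin n) => 2 ≤ S.card),
      (if h : S.card - 2 < n - 1 then β ⟨S.card - 2, h⟩ else 0) *
        (if x ∈ S ∧ S ⊆ insert x D then (1 : ℝ) else 0)
      = ∑ S ∈ (Finset.univ.filter (fun S : Finset (Fin n) => 2 ≤ S.card)).filter
          (fun S => x ∈ S ∧ S ⊆ insert x D),
        (if h : S.card - 2 < n - 1 then β ⟨S.card - 2, h⟩ else 0) := by
    rw [eq_comm, Finset.sum_filter]
    refine Finset.sum_congr rfl fun S _ => ?_
    by_cases h : x ∈ S ∧ S ⊆ insert x D <;> simp [h]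
  rw [this]
  refine Finset.sum_bij' (fun S _ => S.erase x) (fun T _ => insert x T) ?_ ?_ ?_ ?_ ?_
  · intro S hS
    simp only [Finset.mem_filter, Finset.mem_univ, true_and] at hS
    obtain ⟨h2, hxS, hsub⟩ := hS
    simp only [Finset.mem_filter, Finset.mem_powerset]
    constructor
    · intro y hy
      have hyx := Finset.mem_erase.mp hy
      rcases Finset.mem_insert.mp (hsub hyx.2) with h' | h'
      · exact absurd h' hyx.1
      · exact h'
    · rw [← Finset.card_pos, Finset.card_erase_of_mem hxS]
      omega
  · intro T hT
    simp only [Finset.mem_filter, Finset.mem_powerset] at hT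
    obtain ⟨hsub, hne⟩ := hT
    have hxT : x ∉ T := fun h => hx (hsub h)
    simp only [Finset.mem_filter, Finset.mem_univ, true_and]
    refine ⟨?_, Finset.mem_insert_self x T, Finset.insert_subset_insert x hsub⟩
    rw [Finset.card_insert_of_notMem hxT]
    have := Finset.card_pos.mpr hne
    omega
  · intro S hS
    simp only [Finset.mem_filter] at hS
    exact Finset.insert_erase hS.2.1
  · intro T hT
    simp only [Finset.mem_filter, Finset.mem_powerset] at hT
    exact Finset.erase_insert (fun h => hx (hT.1 h))
  · intro S hS
    simp only [Finset.mem_filter] at hS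
    have hxS : x ∈ S := hS.2.1
    have hcard : (S.erase x).card - 1 = S.card - 2 := by
      rw [Finset.card_erase_of_mem hxS]; omega
    simp only [hcard]

theorem stmt4 (n : ℕ) (hn : 2 ≤ n) (β : Fin (n - 1) → ℝ) (μ : Fin n → ℝ)
    (σ π : Equiv.Perm (Fin n)) :
    dTD n β μ σ π =
      ∑ x : Fin n,
        (fβ n β (downSet π x).card + fβ n β (downSet σ x).card
          - 2 * fβ n β ((downSet σ x) ∩ (downSet π x)).card) * μ x := by
  classical
  set w : Finset (Fin n) → ℝ :=
    fun S => (if h : S.card - 2 < n - 1 then β ⟨S.card - 2, h⟩ else 0) with hw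
  have step1 : dTD n β μ σ π
      = ∑ x : Fin n, ∑ S ∈ Finset.univ.filter (fun S : Finset (Fin n) => 2 ≤ S.card),
          w S * (if x ∈ topDiff σ π S then μ x else 0) := by
    rw [dTD, Finset.sum_comm]
    refine Finset.sum_congr rfl fun S _ => ?_
    rw [← Finset.mul_sum]
    congr 1
    rw [Finset.sum_ite_mem, Finset.univ_inter]
  rw [step1]
  refine Finset.sum_congr rfl fun x _ => ?_
  have expand : ∀ S : Finset (Fin n),
      (if x ∈ topDiff σ π S then μ x else 0)
      = ((if x ∈ bestSet π S then (1:ℝ) else 0)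
          + (if x ∈ bestSet σ S then (1:ℝ) else 0)
          - 2 * ((if x ∈ bestSet σ S ∧ x ∈ bestSet π S then (1:ℝ) else 0))) * μ x := by
    intro S
    by_cases hA : x ∈ bestSet σ S <;> by_cases hB : x ∈ bestSet π S
    · have hT : x ∉ topDiff σ π S := by
        simp [topDiff, Finset.mem_symmDiff, hA, hB]
      rw [if_neg hT, if_pos hA, if_pos hB, if_pos ⟨hA, hB⟩]; ring
    · have hT : x ∈ topDiff σ π S := by
        simp [topDiff, Finset.mem_symmDiff, hA, hB]
      rw [if_pos hT, if_pos hA, if_neg hB, if_neg (fun h => hB h.2)]; ring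
    · have hT : x ∈ topDiff σ π S := by
        simp [topDiff, Finset.mem_symmDiff, hA, hB]
      rw [if_pos hT, if_neg hA, if_pos hB, if_neg (fun h => hA h.1)]; ring
    · have hT : x ∉ topDiff σ π S := by
        simp [topDiff, Finset.mem_symmDiff, hA, hB]
      rw [if_neg hT, if_neg hA, if_neg hB, if_neg (fun h => hA h.1)]; ring
  have step2 : ∑ S ∈ Finset.univ.filter (fun S : Finset (Fin n) => 2 ≤ S.card),
        w S * (if x ∈ topDiff σ π S then μ x else 0)
      = ((∑ S ∈ Finset.univ.filter (fun S : Finset (Fin n) => 2 ≤ S.card),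
            w S * (if x ∈ bestSet π S then (1:ℝ) else 0))
        + (∑ S ∈ Finset.univ.filter (fun S : Finset (Fin n) => 2 ≤ S.card),
            w S * (if x ∈ bestSet σ S then (1:ℝ) else 0))
        - 2 * (∑ S ∈ Finset.univ.filter (fun S : Finset (Fin n) => 2 ≤ S.card),
            w S * (if x ∈ bestSet σ S ∧ x ∈ bestSet π S then (1:ℝ) else 0))) * μ x := by
    rw [Finset.sum_congr rfl fun S _ => by rw [expand S, ← mul_assoc]]
    rw [← Finset.sum_mul]
    congr 1
    rw [Finset.mul_sum, ← Finset.sum_add_distrib, ← Finset.sum_sub_distrib]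
    refine Finset.sum_congr rfl fun S _ => ?_
    ring
  rw [step2]
  congr 1
  have hbπ : ∀ S : Finset (Fin n),
      (if x ∈ bestSet π S then (1:ℝ) else 0)
      = (if x ∈ S ∧ S ⊆ insert x (downSet π x) then (1:ℝ) else 0) := fun S => by
    rw [if_congr (mem_bestSet_iff π S x) rfl rfl]
  have hbσ : ∀ S : Finset (Fin n),
      (if x ∈ bestSet σ S then (1:ℝ) else 0)
      = (if x ∈ S ∧ S ⊆ insert x (downSet σ x) then (1:ℝ) else 0) := fun S => by
    rw [if_congr (mem_bestSet_iff σ S x) rfl rfl]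
  have hbboth : ∀ S : Finset (Fin n),
      (if x ∈ bestSet σ S ∧ x ∈ bestSet π S then (1:ℝ) else 0)
      = (if x ∈ S ∧ S ⊆ insert x (downSet σ x ∩ downSet π x) then (1:ℝ) else 0) := by
    intro S
    refine if_congr ?_ rfl rfl
    rw [mem_bestSet_iff σ S x, mem_bestSet_iff π S x]
    rw [Finset.insert_inter_distrib]
    constructor
    · rintro ⟨⟨h1, h2⟩, ⟨_, h3⟩⟩
      exact ⟨h1, Finset.subset_inter h2 h3⟩
    · rintro ⟨h1, h2⟩
      rw [Finset.subset_inter_iff] at h2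
      exact ⟨⟨h1, h2.1⟩, ⟨h1, h2.2⟩⟩
  have hxσ : x ∉ downSet σ x := notMem_downSet σ x
  have hxπ : x ∉ downSet π x := notMem_downSet π x
  have hxint : x ∉ downSet σ x ∩ downSet π x := fun h =>
    hxσ (Finset.mem_inter.mp h).1
  simp only [hbπ, hbσ, hbboth]
  rw [count_sum n hn β x (downSet π x) hxπ,
    count_sum n hn β x (downSet σ x) hxσ,
    count_sum n hn β x (downSet σ x ∩ downSet π x) hxint]
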